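/- For every real k > 2 and every λ > 0, the density f_{k,λ} attains a global maximum on (0, ∞): there exists x_m > 0 such that f_{k,λ}(x_m) ≥ f_{k,λ}(x) for all x > 0. (The mode of the non-central chi-squared distribution exists whenever k > 2.) -/
import Mathlib


open Real

/-- Modified Bessel function of the first kind, defined by its power series. -/
noncomputable def besselI (ν : ℝ) (x : ℝ) : ℝ :=
  ∑' m : ℕ, (x / 2) ^ (2 * (m : ℝ) + ν) / ((Nat.factorial m : ℝ) * Real.Gamma ((m : ℝ) + ν + 1))

/-- PDF of the non-central chi-squared distribution with `k` degrees of freedom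
and non-centrality `lam`. -/
noncomputable def ncchi (k lam x : ℝ) : ℝ :=
  1 / 2 * Real.exp (-(x + lam) / 2) * (x / lam) ^ ((k - 2) / 4) *
    besselI ((k - 2) / 2) (Real.sqrt (lam * x))

open Filter


lemma fact_sq (m : ℕ) : Nat.factorial (2*m) ≤ 4^m * (Nat.factorial m)^2 := by
  induction m with
  | zero => simp
  | succ n ih =>
    have h1 : 2 * (n+1) = (2*n+1) + 1 := by ring
    rw [h1, Nat.factorial_succ, Nat.factorial_succ, Nat.factorial_succ]
    calc (2*n+1+1) * ((2*n+1) * (2*n).factorial)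
        ≤ (2*(n+1)) * ((2*(n+1)) * (4^n * (Nat.factorial n)^2)) := by
          have h2 : 2*n+1 ≤ 2*(n+1) := by omega
          have h3 : 2*n+1+1 = 2*(n+1) := by omega
          rw [h3]
          exact Nat.mul_le_mul_left _ (Nat.mul_le_mul h2 ih)
      _ = 4^(n+1) * ((n+1) * Nat.factorial n)^2 := by ring

lemma gamma_ge {ν : ℝ} (hν : 0 ≤ ν) (m : ℕ) :
    (Nat.factorial m : ℝ) * Real.Gamma (ν + 1) ≤ Real.Gamma ((m:ℝ) + ν + 1) := by
  induction m with
  | zero => simp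
  | succ n ih =>
    have hpos : (0:ℝ) < (n:ℝ) + ν + 1 := by positivity
    have h1 : ((n+1:ℕ):ℝ) + ν + 1 = ((n:ℝ) + ν + 1) + 1 := by push_cast; ring
    rw [h1, Real.Gamma_add_one (ne_of_gt hpos)]
    have hGpos : 0 < Real.Gamma ((n:ℝ) + ν + 1) :=
      Real.Gamma_pos_of_pos hpos
    calc (Nat.factorial (n+1) : ℝ) * Real.Gamma (ν + 1)
        = ((n:ℝ)+1) * ((Nat.factorial n : ℝ) * Real.Gamma (ν+1)) := by
          rw [Nat.factorial_succ]; push_cast; ring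
      _ ≤ ((n:ℝ)+1) * Real.Gamma ((n:ℝ) + ν + 1) := by
          apply mul_le_mul_of_nonneg_left ih (by positivity)
      _ ≤ ((n:ℝ)+ν+1) * Real.Gamma ((n:ℝ) + ν + 1) := by
          apply mul_le_mul_of_nonneg_right (by linarith) hGpos.le

lemma term_le {ν y : ℝ} (hν : 0 < ν) (hy : 0 < y) (m : ℕ) :
    (y/2) ^ (2*(m:ℝ)+ν) / ((Nat.factorial m : ℝ) * Real.Gamma ((m:ℝ)+ν+1))
      ≤ (y/2)^ν / Real.Gamma (ν+1) * (y^(2*m) / ((Nat.factorial (2*m)) : ℝ)) := by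
  have hy2 : (0:ℝ) < y/2 := by positivity
  have hGm : 0 < Real.Gamma ((m:ℝ)+ν+1) := Real.Gamma_pos_of_pos (by positivity)
  have hG : 0 < Real.Gamma (ν+1) := Real.Gamma_pos_of_pos (by linarith)
  have key : ((Nat.factorial (2*m)) : ℝ) * Real.Gamma (ν+1)
      ≤ 4^m * ((Nat.factorial m : ℝ) * Real.Gamma ((m:ℝ)+ν+1)) := by
    calc ((Nat.factorial (2*m)) : ℝ) * Real.Gamma (ν+1)
        ≤ (4^m * (Nat.factorial m : ℝ)^2) * Real.Gamma (ν+1) := by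
          apply mul_le_mul_of_nonneg_right _ hG.le
          exact_mod_cast fact_sq m
      _ = 4^m * ((Nat.factorial m : ℝ) * ((Nat.factorial m : ℝ) * Real.Gamma (ν+1))) := by ring
      _ ≤ 4^m * ((Nat.factorial m : ℝ) * Real.Gamma ((m:ℝ)+ν+1)) := by
          exact mul_le_mul_of_nonneg_left
            (mul_le_mul_of_nonneg_left (gamma_ge hν.le m) (by positivity)) (by positivity)
  have hsplit : (y/2) ^ (2*(m:ℝ)+ν) = y^(2*m) / 4^m * (y/2)^ν := by
    rw [show 2*(m:ℝ)+ν = ((2*m : ℕ):ℝ) + ν by push_cast; ring, Real.rpow_add hy2,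
      Real.rpow_natCast]
    congr 1
    rw [div_pow]
    congr 1
    rw [pow_mul]
    norm_num
  rw [hsplit]
  calc y^(2*m) / 4^m * (y/2)^ν / ((Nat.factorial m : ℝ) * Real.Gamma ((m:ℝ)+ν+1))
      = (y^(2*m) * (y/2)^ν) / (4^m * ((Nat.factorial m : ℝ) * Real.Gamma ((m:ℝ)+ν+1))) := by
        ring
    _ ≤ (y^(2*m) * (y/2)^ν) / (((Nat.factorial (2*m)) : ℝ) * Real.Gamma (ν+1)) := by
        apply div_le_div_of_nonneg_left (by positivity) (by positivity) key
    _ = (y/2)^ν / Real.Gamma (ν+1) * (y^(2*m) / ((Nat.factorial (2*m)) : ℝ)) := by ring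

lemma summable_even (y : ℝ) : Summable (fun m : ℕ => y^(2*m) / ((Nat.factorial (2*m)) : ℝ)) := by
  have := (Real.summable_pow_div_factorial y).comp_injective
    (show Function.Injective (fun m : ℕ => 2*m) from fun a b h => by dsimp at h; omega)
  exact this

lemma term_nonneg {ν y : ℝ} (hν : 0 < ν) (hy : 0 ≤ y) (m : ℕ) :
    0 ≤ (y/2) ^ (2*(m:ℝ)+ν) / ((Nat.factorial m : ℝ) * Real.Gamma ((m:ℝ)+ν+1)) := by
  have hGm : 0 < Real.Gamma ((m:ℝ)+ν+1) := Real.Gamma_pos_of_pos (by positivity)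
  have h1 : (0:ℝ) ≤ (y/2) ^ (2*(m:ℝ)+ν) := Real.rpow_nonneg (by linarith) _
  positivity

lemma summable_term {ν y : ℝ} (hν : 0 < ν) (hy : 0 < y) :
    Summable (fun m : ℕ =>
      (y/2) ^ (2*(m:ℝ)+ν) / ((Nat.factorial m : ℝ) * Real.Gamma ((m:ℝ)+ν+1))) := by
  apply Summable.of_nonneg_of_le (term_nonneg hν hy.le) (term_le hν hy)
  exact (summable_even y).mul_left _

lemma besselI_nonneg {ν y : ℝ} (hν : 0 < ν) (hy : 0 ≤ y) : 0 ≤ besselI ν y :=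
  tsum_nonneg (term_nonneg hν hy)

lemma exp_eq_tsum (y : ℝ) : Real.exp y = ∑' n : ℕ, y^n / (Nat.factorial n : ℝ) := by
  rw [Real.exp_eq_exp_ℝ, NormedSpace.exp_eq_tsum_div]

lemma tsum_even_le_exp {y : ℝ} (hy : 0 ≤ y) :
    (∑' m : ℕ, y^(2*m) / ((Nat.factorial (2*m)) : ℝ)) ≤ Real.exp y := by
  rw [exp_eq_tsum]
  refine Summable.tsum_le_tsum_of_inj (f := fun m : ℕ => y^(2*m) / ((Nat.factorial (2*m)) : ℝ))
    (g := fun n : ℕ => y^n / (Nat.factorial n : ℝ)) (fun m : ℕ => 2*m)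
    (fun a b h => by dsimp at h; omega)
    (fun c _ => div_nonneg (pow_nonneg hy c) (by positivity))
    (fun m => le_rfl)
    (summable_even y)
    (Real.summable_pow_div_factorial y)

lemma besselI_le {ν y : ℝ} (hν : 0 < ν) (hy : 0 < y) :
    besselI ν y ≤ (y/2)^ν / Real.Gamma (ν+1) * Real.exp y := by
  have h1 : besselI ν y ≤ ∑' m : ℕ, (y/2)^ν / Real.Gamma (ν+1) * (y^(2*m) / ((Nat.factorial (2*m)) : ℝ)) :=
    Summable.tsum_le_tsum (term_le hν hy) (summable_term hν hy) ((summable_even y).mul_left _)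
  rw [tsum_mul_left] at h1
  refine h1.trans ?_
  have hG : 0 < Real.Gamma (ν+1) := Real.Gamma_pos_of_pos (by linarith)
  have hc : (0:ℝ) ≤ (y/2)^ν / Real.Gamma (ν+1) := by positivity
  exact mul_le_mul_of_nonneg_left (tsum_even_le_exp hy.le) hc

lemma besselI_pos {ν y : ℝ} (hν : 0 < ν) (hy : 0 < y) : 0 < besselI ν y := by
  have h0 : (0:ℝ) < (y/2) ^ (2*((0:ℕ):ℝ)+ν) / ((Nat.factorial 0 : ℝ) * Real.Gamma (((0:ℕ):ℝ)+ν+1)) := by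
    have hG : 0 < Real.Gamma (((0:ℕ):ℝ)+ν+1) := Real.Gamma_pos_of_pos (by push_cast; linarith)
    have : (0:ℝ) < (y/2) ^ (2*((0:ℕ):ℝ)+ν) := Real.rpow_pos_of_pos (by linarith) _
    positivity
  exact h0.trans_le (Summable.le_tsum (summable_term hν hy) 0 (fun j _ => term_nonneg hν hy.le j))

lemma besselI_sqrt_contOn {ν lam : ℝ} (hν : 0 < ν) (hlam : 0 < lam) {R : ℝ} (hR : 0 < R) :
    ContinuousOn (fun x => besselI ν (Real.sqrt (lam * x))) (Set.Ioo 0 R) := by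
  unfold besselI
  have hY : 0 < Real.sqrt (lam * R) := Real.sqrt_pos.mpr (by positivity)
  refine continuousOn_tsum
    (f := fun (m : ℕ) (x : ℝ) => (Real.sqrt (lam * x)/2) ^ (2*(m:ℝ)+ν) /
      ((Nat.factorial m : ℝ) * Real.Gamma ((m:ℝ)+ν+1)))
    (u := fun (m : ℕ) => (Real.sqrt (lam * R)/2) ^ (2*(m:ℝ)+ν) /
      ((Nat.factorial m : ℝ) * Real.Gamma ((m:ℝ)+ν+1))) ?_ ?_ ?_
  · intro m
    apply Continuous.continuousOn
    have hq : (0:ℝ) ≤ 2*(m:ℝ)+ν := by positivity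
    exact (((continuous_const.mul continuous_id).sqrt.div_const 2).rpow_const
      (fun x => Or.inr hq)).div_const _
  · exact summable_term hν hY
  · intro m x hx
    rw [Real.norm_of_nonneg (term_nonneg hν (Real.sqrt_nonneg _) m)]
    have hGm : 0 < Real.Gamma ((m:ℝ)+ν+1) := Real.Gamma_pos_of_pos (by positivity)
    apply div_le_div_of_nonneg_right ?_ (by positivity :
      (0:ℝ) ≤ (Nat.factorial m : ℝ) * Real.Gamma ((m:ℝ)+ν+1))
    apply Real.rpow_le_rpow (by positivity) ?_ (by positivity)
    have : Real.sqrt (lam * x) ≤ Real.sqrt (lam * R) :=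
      Real.sqrt_le_sqrt (by nlinarith [hx.1, hx.2])
    linarith

section ncchi_props
variable {k lam : ℝ} (hk : 2 < k) (hlam : 0 < lam)

lemma ncchi_nonneg (hk : 2 < k) (hlam : 0 < lam) {x : ℝ} (hx : 0 < x) :
    0 ≤ ncchi k lam x := by
  have hν : 0 < (k-2)/2 := by linarith
  exact mul_nonneg (by positivity) (besselI_nonneg hν (Real.sqrt_nonneg _))

lemma ncchi_pos (hk : 2 < k) (hlam : 0 < lam) : 0 < ncchi k lam lam := by
  have hν : 0 < (k-2)/2 := by linarith
  unfold ncchi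
  have h1 : Real.sqrt (lam * lam) = lam := Real.sqrt_mul_self hlam.le
  rw [h1, div_self hlam.ne', Real.one_rpow]
  have := besselI_pos hν hlam
  positivity

lemma ncchi_continuousAt (hk : 2 < k) (hlam : 0 < lam) {x0 : ℝ} (hx0 : 0 < x0) :
    ContinuousAt (ncchi k lam) x0 := by
  have hν : 0 < (k-2)/2 := by linarith
  have hq : (0:ℝ) ≤ (k-2)/4 := by linarith
  have h3 : ContinuousAt (fun x => besselI ((k-2)/2) (Real.sqrt (lam * x))) x0 :=
    (besselI_sqrt_contOn hν hlam (show (0:ℝ) < x0 + 1 by linarith)).continuousAt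
      (isOpen_Ioo.mem_nhds ⟨hx0, lt_add_one x0⟩)
  have h1 : Continuous (fun x : ℝ => 1 / 2 * Real.exp (-(x + lam) / 2)) := by
    continuity
  have h2 : Continuous (fun x : ℝ => (x / lam) ^ ((k - 2) / 4)) :=
    (continuous_id.div_const lam).rpow_const (fun x => Or.inr hq)
  exact ((h1.continuousAt.mul h2.continuousAt).mul h3 : _)

/-- intermediate upper bound -/
lemma ncchi_le_B (hk : 2 < k) (hlam : 0 < lam) {x : ℝ} (hx : 0 < x) :
    ncchi k lam x ≤ 1 / 2 * Real.exp (-(x + lam) / 2) * (x / lam) ^ ((k - 2) / 4) *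
      ((Real.sqrt (lam * x)/2) ^ ((k-2)/2) / Real.Gamma ((k-2)/2+1) * Real.exp (Real.sqrt (lam * x))) := by
  have hν : 0 < (k-2)/2 := by linarith
  have hy : 0 < Real.sqrt (lam * x) := Real.sqrt_pos.mpr (by positivity)
  exact mul_le_mul_of_nonneg_left (besselI_le hν hy) (by positivity)

lemma ncchi_tendsto_zero_atZero (hk : 2 < k) (hlam : 0 < lam) :
    Tendsto (ncchi k lam) (nhdsWithin 0 (Set.Ioi 0)) (nhds 0) := by
  have hν : 0 < (k-2)/2 := by linarith
  have hq : (0:ℝ) < (k-2)/4 := by linarith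
  set B : ℝ → ℝ := fun x => 1 / 2 * Real.exp (-(x + lam) / 2) * (x / lam) ^ ((k - 2) / 4) *
      ((Real.sqrt (lam * x)/2) ^ ((k-2)/2) / Real.Gamma ((k-2)/2+1) * Real.exp (Real.sqrt (lam * x)))
    with hB
  have hBc : ContinuousAt B 0 := by
    apply ContinuousAt.mul
    apply ContinuousAt.mul
    · exact (by continuity : Continuous (fun x : ℝ => 1 / 2 * Real.exp (-(x + lam) / 2))).continuousAt
    · exact ((continuous_id.div_const lam).rpow_const (fun x => Or.inr hq.le)).continuousAt
    · apply ContinuousAt.mul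
      · apply ContinuousAt.div_const
        exact (((((continuous_const.mul continuous_id).sqrt).div_const 2).rpow_const
          (fun x => Or.inr hν.le)).continuousAt)
      · exact (Real.continuous_exp.comp ((continuous_const.mul continuous_id).sqrt)).continuousAt
  have hB0 : B 0 = 0 := by
    simp only [hB]
    rw [zero_div, Real.zero_rpow (by positivity : ((k:ℝ)-2)/4 ≠ 0)]
    ring
  have hT : Tendsto B (nhdsWithin 0 (Set.Ioi 0)) (nhds 0) := by
    have h := (hBc.continuousWithinAt (s := Set.Ioi 0)).tendsto
    rwa [hB0] at h
  apply squeeze_zero' ?_ ?_ hT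
  · filter_upwards [self_mem_nhdsWithin] with x hx
    exact ncchi_nonneg hk hlam hx
  · filter_upwards [self_mem_nhdsWithin] with x hx
    exact ncchi_le_B hk hlam hx

lemma ncchi_tendsto_zero_atTop (hk : 2 < k) (hlam : 0 < lam) :
    Tendsto (ncchi k lam) atTop (nhds 0) := by
  have hν : 0 < (k-2)/2 := by linarith
  have hq : (0:ℝ) < (k-2)/4 := by linarith
  have hG : 0 < Real.Gamma ((k-2)/2+1) := Real.Gamma_pos_of_pos (by linarith)
  set q : ℝ := (k-2)/4 with hqdef
  set ν : ℝ := (k-2)/2 with hνdef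
  set a : ℝ := 2*q/Real.sqrt lam + Real.sqrt lam/2*ν + Real.sqrt lam with ha
  have hsl : 0 < Real.sqrt lam := Real.sqrt_pos.mpr hlam
  have ha0 : 0 < a := by positivity
  -- main pointwise bound
  have key : ∀ x : ℝ, 0 < x → ncchi k lam x ≤
      1/(2*Real.Gamma (ν+1)) * Real.exp (a * Real.sqrt x - x/2) := by
    intro x hx
    have hsx : 0 ≤ Real.sqrt x := Real.sqrt_nonneg x
    have hsplit : Real.sqrt (lam * x) = Real.sqrt lam * Real.sqrt x :=
      Real.sqrt_mul hlam.le x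
    have h1 : Real.exp (-(x + lam)/2) ≤ Real.exp (-x/2) := by
      apply Real.exp_le_exp.mpr; linarith
    -- (x/lam)^q ≤ exp (2*√(x/lam)*q)
    have hz : 0 < x / lam := by positivity
    have hzz : Real.sqrt (x/lam) ≤ Real.exp (Real.sqrt (x/lam)) := by
      linarith [Real.add_one_le_exp (Real.sqrt (x/lam))]
    have h2' : x/lam ≤ Real.exp (2 * Real.sqrt (x/lam)) := by
      nth_rewrite 1 [← Real.mul_self_sqrt hz.le]
      rw [two_mul, Real.exp_add]
      exact mul_le_mul hzz hzz (Real.sqrt_nonneg _) (Real.exp_pos _).le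
    have h2 : (x/lam)^q ≤ Real.exp (2 * (Real.sqrt x / Real.sqrt lam) * q) := by
      calc (x/lam)^q ≤ (Real.exp (2 * Real.sqrt (x/lam)))^q :=
            Real.rpow_le_rpow hz.le h2' hq.le
        _ = Real.exp (2 * Real.sqrt (x/lam) * q) := (Real.exp_mul _ _).symm
        _ = Real.exp (2 * (Real.sqrt x / Real.sqrt lam) * q) := by
            rw [Real.sqrt_div hx.le lam]
    -- (√(lam x)/2)^ν ≤ exp(√(lam x)/2 * ν)
    have hb : 0 ≤ Real.sqrt (lam*x)/2 := by positivity
    have h3 : (Real.sqrt (lam*x)/2)^ν ≤ Real.exp (Real.sqrt lam * Real.sqrt x / 2 * ν) := by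
      calc (Real.sqrt (lam*x)/2)^ν ≤ (Real.exp (Real.sqrt (lam*x)/2))^ν := by
            apply Real.rpow_le_rpow hb _ hν.le
            linarith [Real.add_one_le_exp (Real.sqrt (lam*x)/2)]
        _ = Real.exp (Real.sqrt (lam*x)/2 * ν) := (Real.exp_mul _ _).symm
        _ = Real.exp (Real.sqrt lam * Real.sqrt x / 2 * ν) := by rw [hsplit]
    calc ncchi k lam x ≤ 1 / 2 * Real.exp (-(x + lam) / 2) * (x / lam) ^ q *
          ((Real.sqrt (lam * x)/2) ^ ν / Real.Gamma (ν+1) * Real.exp (Real.sqrt (lam * x))) :=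
          ncchi_le_B hk hlam hx
      _ ≤ 1 / 2 * Real.exp (-x/2) * Real.exp (2 * (Real.sqrt x / Real.sqrt lam) * q) *
          (Real.exp (Real.sqrt lam * Real.sqrt x / 2 * ν) / Real.Gamma (ν+1) *
            Real.exp (Real.sqrt lam * Real.sqrt x)) := by
          have t1 : 1 / 2 * Real.exp (-(x + lam) / 2) ≤ 1 / 2 * Real.exp (-x/2) := by
            linarith
          have hwn : (0:ℝ) ≤ (Real.sqrt (lam*x)/2) ^ ν := Real.rpow_nonneg hb _
          have t2 : (Real.sqrt (lam * x)/2) ^ ν / Real.Gamma (ν+1) * Real.exp (Real.sqrt (lam * x))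
              ≤ Real.exp (Real.sqrt lam * Real.sqrt x / 2 * ν) / Real.Gamma (ν+1) *
                Real.exp (Real.sqrt lam * Real.sqrt x) := by
            rw [hsplit]
            apply mul_le_mul _ le_rfl (Real.exp_pos _).le (by positivity)
            exact div_le_div_of_nonneg_right (hsplit ▸ h3) hG.le
          apply mul_le_mul _ t2 _ (by positivity)
          · apply mul_le_mul t1 h2 (Real.rpow_nonneg hz.le _) (by positivity)
          · exact mul_nonneg (div_nonneg hwn hG.le) (Real.exp_pos _).le
      _ = 1/(2*Real.Gamma (ν+1)) * Real.exp (a * Real.sqrt x - x/2) := by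
          rw [show a * Real.sqrt x - x/2 =
            (-x/2) + (2 * (Real.sqrt x / Real.sqrt lam) * q) +
              ((Real.sqrt lam * Real.sqrt x / 2 * ν) + Real.sqrt lam * Real.sqrt x) by
              rw [ha]; field_simp; ring]
          rw [Real.exp_add, Real.exp_add, Real.exp_add]
          field_simp
  -- the decaying bound tends to zero
  have hdecay : Tendsto (fun x : ℝ => 1/(2*Real.Gamma (ν+1)) *
      Real.exp (a * Real.sqrt x - x/2)) atTop (nhds 0) := by
    have hexp : Tendsto (fun x : ℝ => a * Real.sqrt x - x/2) atTop atBot := by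
      clear_value a
      apply tendsto_atBot_mono' atTop ?_ ?_
      · exact fun x : ℝ => -x/4
      · filter_upwards [eventually_ge_atTop ((4*a)^2), eventually_ge_atTop (0:ℝ)]
          with x hx1 hx2
        have h4a : 4*a ≤ Real.sqrt x := by
          rw [show (4*a) = Real.sqrt ((4*a)^2) from (Real.sqrt_sq (by positivity)).symm]
          exact Real.sqrt_le_sqrt hx1
        have hsx : 0 ≤ Real.sqrt x := Real.sqrt_nonneg x
        have hxx : Real.sqrt x * Real.sqrt x = x := Real.mul_self_sqrt hx2
        have h5 : 4*a*Real.sqrt x ≤ Real.sqrt x * Real.sqrt x :=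
          mul_le_mul_of_nonneg_right h4a hsx
        rw [hxx] at h5
        have hax : a * Real.sqrt x ≤ x / 4 := by linarith [h5]
        linarith [hax]
      · have h4 : Tendsto (fun x : ℝ => x/4) atTop atTop :=
          tendsto_id.atTop_div_const (by norm_num)
        have := tendsto_neg_atTop_atBot.comp h4
        apply this.congr
        intro x; simp [neg_div]
    have := (Real.tendsto_exp_atBot.comp hexp).const_mul (1/(2*Real.Gamma (ν+1)))
    simpa using this
  apply squeeze_zero' ?_ ?_ hdecay
  · filter_upwards [eventually_gt_atTop (0:ℝ)] with x hx
    exact ncchi_nonneg hk hlam hx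
  · filter_upwards [eventually_gt_atTop (0:ℝ)] with x hx
    exact key x hx

end ncchi_props

theorem stmt_14 (k lam : ℝ) (hk : 2 < k) (hlam : 0 < lam) :
    ∃ xm : ℝ, 0 < xm ∧ ∀ x : ℝ, 0 < x → ncchi k lam x ≤ ncchi k lam xm := by
  have hc : 0 < ncchi k lam lam := ncchi_pos hk hlam
  -- small x
  have h0 : ∀ᶠ x in nhdsWithin 0 (Set.Ioi 0), ncchi k lam x < ncchi k lam lam :=
    (ncchi_tendsto_zero_atZero hk hlam).eventually_lt_const hc
  rw [eventually_nhdsWithin_iff] at h0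
  obtain ⟨ε, hε, hball⟩ := Metric.eventually_nhds_iff.mp h0
  -- large x
  obtain ⟨b, hb⟩ := ((ncchi_tendsto_zero_atTop hk hlam).eventually_lt_const hc).exists_forall_of_atTop
  set A : ℝ := min (ε/2) lam with hA
  set B : ℝ := max b lam with hBdef
  have hA0 : 0 < A := lt_min (by linarith) hlam
  have hAlam : A ≤ lam := min_le_right _ _
  have hlamB : lam ≤ B := le_max_right _ _
  have hcont : ContinuousOn (ncchi k lam) (Set.Icc A B) := fun x hx =>
    (ncchi_continuousAt hk hlam (lt_of_lt_of_le hA0 hx.1)).continuousWithinAt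
  obtain ⟨xm, hxm, hmax⟩ := isCompact_Icc.exists_isMaxOn ⟨lam, hAlam, hlamB⟩ hcont
  refine ⟨xm, lt_of_lt_of_le hA0 hxm.1, ?_⟩
  intro x hx
  by_cases hxi : x ∈ Set.Icc A B
  · exact hmax hxi
  · have hlt : ncchi k lam x < ncchi k lam lam := by
      rcases not_and_or.mp hxi with h | h
      · push_neg at h
        have hxε : x < ε := by
          have : A ≤ ε/2 := min_le_left _ _
          linarith
        apply hball
        · rw [Real.dist_eq, sub_zero, abs_of_pos hx]; exact hxε
        · exact hx
      · push_neg at h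
        exact hb x (le_of_lt (lt_of_le_of_lt (le_max_left b lam) h))
    exact hlt.le.trans (hmax ⟨hAlam, hlamB⟩)
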